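/- Consider the objective J_φ(s) = Σ_{i=1}^m α_i E_{v_i}[d_φ(Y_i, s)] with μ = (Σ_i α_i E_{v_i}[Y_i])/(Σ_i α_i). Then for all s ∈ ri(S): J_φ(s) − J_φ(μ) = (Σ_i α_i) · d_φ(μ, s). -/

import Mathlib

open scoped RealInnerProductSpace BigOperators

/-- The Bregman divergence associated to a convex function `φ` with gradient map `g`. -/
noncomputable def bregman {k : ℕ} (φ : EuclideanSpace ℝ (Fin k) → ℝ)
    (g : EuclideanSpace ℝ (Fin k) → EuclideanSpace ℝ (Fin k))
    (p q : EuclideanSpace ℝ (Fin k)) : ℝ :=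
  φ p - φ q - ⟪p - q, g q⟫

/-- for the weighted objective
`J_φ(s) = Σ_i α_i E_{v_i}[d_φ(Y_i, s)]` with weighted mean
`μ = (Σ_i α_i E_{v_i}[Y_i]) / (Σ_i α_i)`, one has
`J_φ(s) − J_φ(μ) = (Σ_i α_i) · d_φ(μ, s)` for all `s ∈ ri(S)`. -/
theorem weighted_bregman_objective_gap {k m : ℕ} (hm : 0 < m)
    (S : Set (EuclideanSpace ℝ (Fin k))) (hS : Convex ℝ S)
    (φ : EuclideanSpace ℝ (Fin k) → ℝ)
    (g : EuclideanSpace ℝ (Fin k) → EuclideanSpace ℝ (Fin k))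
    (hφ : StrictConvexOn ℝ S φ)
    (hg : ∀ q ∈ intrinsicInterior ℝ S, HasGradientAt φ (g q) q)
    (ν : Fin m → ℕ)
    (Y : (i : Fin m) → Fin (ν i) → EuclideanSpace ℝ (Fin k))
    (hY : ∀ i j, Y i j ∈ S)
    (v : (i : Fin m) → Fin (ν i) → ℝ)
    (hv : ∀ i j, 0 ≤ v i j) (hv1 : ∀ i, ∑ j, v i j = 1)
    (hE : ∀ i, ∑ j, v i j • Y i j ∈ intrinsicInterior ℝ S)
    (α : Fin m → ℝ) (hα : ∀ i, 0 < α i)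
    (μ : EuclideanSpace ℝ (Fin k))
    (hμdef : μ = (∑ i, α i)⁻¹ • ∑ i, α i • ∑ j, v i j • Y i j)
    (hμ : μ ∈ intrinsicInterior ℝ S) :
    ∀ s ∈ intrinsicInterior ℝ S,
      (∑ i, α i * ∑ j, v i j * bregman φ g (Y i j) s) -
        (∑ i, α i * ∑ j, v i j * bregman φ g (Y i j) μ)
      = (∑ i, α i) * bregman φ g μ s := by
  intro s hs
  have hA : (0:ℝ) < ∑ i, α i :=
    Finset.sum_pos (fun i _ => hα i) (Finset.univ_nonempty_iff.mpr ⟨⟨0, hm⟩⟩)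
  have hsum : ∑ i, α i • ∑ j, v i j • Y i j = (∑ i, α i) • μ := by
    rw [hμdef, smul_inv_smul₀ hA.ne']
  have h1 : ∀ x : EuclideanSpace ℝ (Fin k),
      ∑ i, α i * ⟪∑ j, v i j • Y i j, x⟫ = (∑ i, α i) * ⟪μ, x⟫ := by
    intro x
    have h := congrArg (fun z : EuclideanSpace ℝ (Fin k) => (inner ℝ z x : ℝ)) hsum
    simpa only [sum_inner, real_inner_smul_left] using h
  have hper : ∀ (i : Fin m) (t : EuclideanSpace ℝ (Fin k)),
      ∑ j, v i j * bregman φ g (Y i j) t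
        = (∑ j, v i j * φ (Y i j)) - φ t
            - (⟪∑ j, v i j • Y i j, g t⟫ - ⟪t, g t⟫) := by
    intro i t
    have expand : ∀ j, v i j * bregman φ g (Y i j) t
        = v i j * φ (Y i j) - v i j * φ t
            - (v i j * ⟪Y i j, g t⟫ - v i j * ⟪t, g t⟫) := by
      intro j
      simp only [bregman, inner_sub_left]
      ring
    simp only [expand]
    rw [Finset.sum_sub_distrib, Finset.sum_sub_distrib, Finset.sum_sub_distrib,
      ← Finset.sum_mul, ← Finset.sum_mul, hv1]
    simp only [sum_inner, real_inner_smul_left, one_mul]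
  simp only [hper]
  have expand2 : ∀ i : Fin m,
      α i * ((∑ j, v i j * φ (Y i j)) - φ s
          - (⟪∑ j, v i j • Y i j, g s⟫ - ⟪s, g s⟫))
        - α i * ((∑ j, v i j * φ (Y i j)) - φ μ
          - (⟪∑ j, v i j • Y i j, g μ⟫ - ⟪μ, g μ⟫))
      = α i * ⟪∑ j, v i j • Y i j, g μ⟫ - α i * ⟪∑ j, v i j • Y i j, g s⟫
          + α i * (φ μ - φ s + ⟪s, g s⟫ - ⟪μ, g μ⟫) := by
    intro i; ring
  rw [← Finset.sum_sub_distrib]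
  simp only [expand2]
  rw [Finset.sum_add_distrib, Finset.sum_sub_distrib, h1, h1, ← Finset.sum_mul]
  simp only [bregman, inner_sub_left]
  ring
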